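/- arXiv:1406.7089 — 3 statements merged into one kernel-verified Lean document; each statement's English description precedes it below -/
import Mathlib

section
/- For real numbers m, p, k with m, p > 0 and p > k > -m, if k(p - m - k) ≤ 0 then Γ(p)·Γ(m) ≤ Γ(p - k)·Γ(m + k). -/
theorem gamma_chebyshev_le (m p k : ℝ) (hm : 0 < m) (hp : 0 < p)
    (hkp : k < p) (hkm : -m < k) (h : k * (p - m - k) ≤ 0) :
    Real.Gamma p * Real.Gamma m ≤ Real.Gamma (p - k) * Real.Gamma (m + k) := by
  set a := p - k with ha
  set b := m + k with hb
  have hA : 0 < a := by simp [ha]; linarith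
  have hB : 0 < b := by simp [hb]; linarith
  by_cases hab : a = b
  · have hk2 : k * k ≤ 0 := by nlinarith [hab]
    have hk : k = 0 := by nlinarith [mul_self_nonneg k]
    simp [ha, hb, hk]
  · have hd : a - b ≠ 0 := sub_ne_zero.2 hab
    have hd2 : (0:ℝ) < (a - b)^2 := by positivity
    set t := (p - b) / (a - b) with htdef
    have ht0 : 0 ≤ t := by
      have h1 : 0 ≤ (p - b) * (a - b) := by simp only [ha, hb]; nlinarith
      have : t = (p - b) * (a - b) / (a - b)^2 := by
        rw [htdef, sq, mul_div_mul_right _ _ hd]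
      rw [this]
      exact div_nonneg h1 hd2.le
    have ht1 : 0 ≤ 1 - t := by
      have h1 : 0 ≤ (a - p) * (a - b) := by simp only [ha, hb]; nlinarith
      have : 1 - t = (a - p) * (a - b) / (a - b)^2 := by
        rw [htdef]; field_simp; ring
      rw [this]
      exact div_nonneg h1 hd2.le
    have hst : t + (1 - t) = 1 := by ring
    have hpa : t * a + (1 - t) * b = p := by
      rw [htdef]; field_simp; ring
    have hma : (1 - t) * a + t * b = m := by
      rw [htdef]; field_simp; simp only [ha, hb]; ring
    have hc := Real.convexOn_log_Gamma.2 (Set.mem_Ioi.2 hA) (Set.mem_Ioi.2 hB)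
      ht0 ht1 hst
    have hc2 := Real.convexOn_log_Gamma.2 (Set.mem_Ioi.2 hA) (Set.mem_Ioi.2 hB)
      ht1 ht0 (by ring)
    simp only [smul_eq_mul, Function.comp_apply] at hc hc2
    rw [hpa] at hc
    rw [hma] at hc2
    have hsum : Real.log (Real.Gamma p) + Real.log (Real.Gamma m) ≤
        Real.log (Real.Gamma a) + Real.log (Real.Gamma b) := by nlinarith [hc, hc2]
    have hΓp := Real.Gamma_pos_of_pos hp
    have hΓm := Real.Gamma_pos_of_pos hm
    have hΓa := Real.Gamma_pos_of_pos hA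
    have hΓb := Real.Gamma_pos_of_pos hB
    calc Real.Gamma p * Real.Gamma m
        = Real.exp (Real.log (Real.Gamma p) + Real.log (Real.Gamma m)) := by
          rw [Real.exp_add, Real.exp_log hΓp, Real.exp_log hΓm]
      _ ≤ Real.exp (Real.log (Real.Gamma a) + Real.log (Real.Gamma b)) :=
          Real.exp_le_exp.2 hsum
      _ = Real.Gamma a * Real.Gamma b := by
          rw [Real.exp_add, Real.exp_log hΓa, Real.exp_log hΓb]
end

section
/- Let n ≥ 3 be an integer, q real with 1 < q < n/(n-2), and define I(t) = (1-t²)^(n-q(n-2)) · ∫₀¹ (1 - r^(n-2))^q · r^(n-q(n-2)-1) / (1 - r²t²)^(n-q(n-2)+1) dr for 0 ≤ t < 1. Then I(t) ≤ I(0) for all t ∈ [0,1). -/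
open MeasureTheory Set

lemma rpow_algebra (B D S K α : ℝ) (hB : 0 < B) (hD : 0 < D) (hS : 0 < S) :
    B ^ α * (B / (D * Real.sqrt D) * (K * (S / Real.sqrt D) ^ (α - 1) / ((B / D) ^ (α + 1)))) =
      K * S ^ (α - 1) * D ^ (α / 2) := by
  rw [Real.sqrt_eq_rpow]
  rw [Real.div_rpow hS.le (Real.rpow_nonneg hD.le _), ← Real.rpow_mul hD.le,
    Real.div_rpow hB.le hD.le]
  have hB1 : B ^ (α + 1) = B ^ α * B := by rw [Real.rpow_add hB, Real.rpow_one]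
  have hDdec : D * D ^ (1/2:ℝ) * D ^ ((1/2)*(α-1)) * D ^ (α/2) = D ^ (α+1) := by
    rw [show α + 1 = 1 + 1/2 + (1/2)*(α-1) + α/2 by ring, Real.rpow_add hD, Real.rpow_add hD,
      Real.rpow_add hD, Real.rpow_one]
  rw [hB1, ← hDdec]
  have n1 : B ^ α ≠ 0 := (Real.rpow_pos_of_pos hB _).ne'
  have n2 : D ^ (1/2:ℝ) ≠ 0 := (Real.rpow_pos_of_pos hD _).ne'
  have n3 : D ^ ((1/2)*(α-1)) ≠ 0 := (Real.rpow_pos_of_pos hD _).ne'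
  have n4 : D ^ (α/2) ≠ 0 := (Real.rpow_pos_of_pos hD _).ne'
  have n5 : S ^ (α-1) ≠ 0 := (Real.rpow_pos_of_pos hS _).ne'
  field_simp

set_option maxHeartbeats 1000000 in
theorem main_lemma_max_at_zero (n : ℕ) (hn : 3 ≤ n) (q : ℝ) (hq1 : 1 < q)
    (hq2 : q < n / ((n : ℝ) - 2)) (I : ℝ → ℝ)
    (hI : ∀ t : ℝ, 0 ≤ t → t < 1 → I t =
      (1 - t ^ 2) ^ ((n : ℝ) - q * ((n : ℝ) - 2)) *
        ∫ r in (0:ℝ)..1,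
          (1 - r ^ ((n : ℝ) - 2)) ^ q * r ^ ((n : ℝ) - q * ((n : ℝ) - 2) - 1) /
            (1 - r ^ 2 * t ^ 2) ^ ((n : ℝ) - q * ((n : ℝ) - 2) + 1))
    (t : ℝ) (ht : t ∈ Set.Ico (0:ℝ) 1) : I t ≤ I 0 := by
  obtain ⟨ht0, ht1⟩ := ht
  have hn2 : (2:ℝ) < (n:ℝ) := by exact_mod_cast (by omega : 2 < n)
  have hm0 : (0:ℝ) < (n:ℝ) - 2 := by linarith
  have hq0 : (0:ℝ) < q := by linarith
  set α : ℝ := (n:ℝ) - q * ((n:ℝ) - 2) with hαdef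
  have hα0 : 0 < α := by
    rw [lt_div_iff₀ hm0] at hq2; simp only [hαdef]; linarith
  have ht2 : t ^ 2 < 1 := by nlinarith
  have h1t : (0:ℝ) < 1 - t ^ 2 := by linarith
  -- the substitution map
  set φ : ℝ → ℝ := fun s => s / Real.sqrt (1 - t^2 + s^2 * t^2) with hφdef
  set φ' : ℝ → ℝ := fun s => (1 - t^2) / ((1 - t^2 + s^2*t^2) * Real.sqrt (1 - t^2 + s^2*t^2)) with hφ'def
  have hD0 : ∀ s : ℝ, 0 < 1 - t^2 + s^2*t^2 := by
    intro s
    have := mul_nonneg (sq_nonneg s) (sq_nonneg t)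
    linarith
  have hderiv : ∀ s : ℝ, HasDerivAt φ (φ' s) s := by
    intro s
    have hD : 0 < 1 - t^2 + s^2*t^2 := hD0 s
    have hsq : 0 < Real.sqrt (1 - t^2 + s^2*t^2) := Real.sqrt_pos.2 hD
    have hDd : HasDerivAt (fun s : ℝ => 1 - t^2 + s^2*t^2) (2*s*t^2) s := by
      have h1 : HasDerivAt (fun s : ℝ => s^2) (2*s) s := by simpa using hasDerivAt_pow 2 s
      have := (h1.mul_const (t^2)).const_add (1 - t^2)
      convert this using 1 <;> ring
    have hsd : HasDerivAt (fun s : ℝ => Real.sqrt (1 - t^2 + s^2*t^2))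
        (1/(2*Real.sqrt (1-t^2+s^2*t^2)) * (2*s*t^2)) s :=
      (Real.hasDerivAt_sqrt hD.ne').comp s hDd
    have hdiv := (hasDerivAt_id s).div hsd hsq.ne'
    have heq : (1 - t^2) / ((1 - t^2 + s^2*t^2) * Real.sqrt (1 - t^2 + s^2*t^2)) =
        (1 * Real.sqrt (1 - t^2 + s^2*t^2) - id s * (1/(2*Real.sqrt (1-t^2+s^2*t^2)) * (2*s*t^2))) /
        Real.sqrt (1 - t^2 + s^2*t^2) ^ 2 := by
      have hg : Real.sqrt (1-t^2+s^2*t^2) ^ 2 = 1-t^2+s^2*t^2 := Real.sq_sqrt hD.le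
      set g := Real.sqrt (1 - t^2 + s^2*t^2) with hgdef
      field_simp
      simp only [id_eq]; linear_combination (-t^2*s^2) * hg
    show HasDerivAt φ ((1 - t^2) / ((1 - t^2 + s^2*t^2) * Real.sqrt (1 - t^2 + s^2*t^2))) s
    rw [heq]
    exact hdiv
  have hφ'pos : ∀ s : ℝ, 0 < φ' s := by
    intro s
    exact div_pos h1t (mul_pos (hD0 s) (Real.sqrt_pos.2 (hD0 s)))
  have hφ0 : φ 0 = 0 := by simp [hφdef]
  have hφ1 : φ 1 = 1 := by
    simp only [hφdef]
    norm_num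
  have hcont : ContinuousOn φ (Icc 0 1) := fun s _ => (hderiv s).continuousAt.continuousWithinAt
  have hmono : StrictMonoOn φ (Icc 0 1) := by
    apply strictMonoOn_of_deriv_pos (convex_Icc 0 1) hcont
    intro s _
    rw [(hderiv s).deriv]
    exact hφ'pos s
  have hmaps : ∀ s ∈ Ioo (0:ℝ) 1, φ s ∈ Ioo (0:ℝ) 1 := by
    intro s hs
    have hD : 0 < 1 - t^2 + s^2*t^2 := hD0 s
    have hsq : 0 < Real.sqrt (1 - t^2 + s^2*t^2) := Real.sqrt_pos.2 hD
    constructor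
    · exact div_pos hs.1 hsq
    · rw [div_lt_one hsq]
      refine Real.lt_sqrt_of_sq_lt ?_
      nlinarith [mul_pos (show (0:ℝ) < 1 - s^2 by nlinarith [hs.1, hs.2]) h1t]
  have himg : φ '' Ioo 0 1 = Ioo 0 1 := by
    apply Subset.antisymm
    · rintro r ⟨s, hs, rfl⟩
      exact hmaps s hs
    · have := intermediate_value_Ioo (by norm_num : (0:ℝ) ≤ 1) hcont
      rw [hφ0, hφ1] at this
      exact this
  have hinj : InjOn φ (Ioo 0 1) := (hmono.injOn).mono Ioo_subset_Icc_self
  -- rewrite the two values of I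
  rw [hI t ht0 ht1, hI 0 le_rfl one_pos]
  have hI0simp : (1 - (0:ℝ) ^ 2) ^ α * (∫ r in (0:ℝ)..1,
      (1 - r ^ ((n:ℝ)-2))^q * r^(α-1) / (1 - r^2*(0:ℝ)^2)^(α+1)) =
      ∫ r in (0:ℝ)..1, (1 - r^((n:ℝ)-2))^q * r^(α-1) := by
    norm_num [Real.one_rpow]
  rw [hI0simp]
  rw [intervalIntegral.integral_of_le (by norm_num : (0:ℝ) ≤ 1),
    intervalIntegral.integral_of_le (by norm_num : (0:ℝ) ≤ 1),
    MeasureTheory.integral_Ioc_eq_integral_Ioo, MeasureTheory.integral_Ioc_eq_integral_Ioo]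
  -- change of variables
  have hchg : (∫ r in Ioo (0:ℝ) 1,
      (1 - r ^ ((n:ℝ)-2))^q * r^(α-1) / (1 - r^2*t^2)^(α+1)) =
      ∫ s in Ioo (0:ℝ) 1, |φ' s| •
        ((1 - (φ s) ^ ((n:ℝ)-2))^q * (φ s)^(α-1) / (1 - (φ s)^2*t^2)^(α+1)) := by
    have h := MeasureTheory.integral_image_eq_integral_abs_deriv_smul measurableSet_Ioo
      (fun s (_ : s ∈ Ioo (0:ℝ) 1) => (hderiv s).hasDerivWithinAt) hinj
      (fun r => (1 - r ^ ((n:ℝ)-2))^q * r^(α-1) / (1 - r^2*t^2)^(α+1))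
    rw [himg] at h
    exact h
  rw [hchg, ← MeasureTheory.integral_const_mul]
  -- integrability of the majorant
  have hGint : IntegrableOn (fun s : ℝ => (1 - s ^ ((n:ℝ)-2))^q * s^(α-1)) (Ioo (0:ℝ) 1) := by
    have h1 : IntegrableOn (fun s : ℝ => s^(α-1)) (Ioo (0:ℝ) 1) := by
      have h := intervalIntegral.intervalIntegrable_rpow' (show (-1:ℝ) < α - 1 by linarith)
        (a := (0:ℝ)) (b := 1)
      rw [intervalIntegrable_iff, Set.uIoc_of_le (by norm_num : (0:ℝ) ≤ 1)] at h
      exact h.mono_set Set.Ioo_subset_Ioc_self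
    apply MeasureTheory.Integrable.mono h1
    · apply Measurable.aestronglyMeasurable
      fun_prop
    · filter_upwards [MeasureTheory.ae_restrict_mem measurableSet_Ioo] with s hs
      have hsm : s ^ ((n:ℝ)-2) ≤ 1 := Real.rpow_le_one hs.1.le hs.2.le hm0.le
      have h0 : (0:ℝ) ≤ 1 - s ^ ((n:ℝ)-2) := by linarith
      have hK1 : (1 - s ^ ((n:ℝ)-2))^q ≤ 1 := Real.rpow_le_one h0 (by
        have : (0:ℝ) ≤ s ^ ((n:ℝ)-2) := Real.rpow_nonneg hs.1.le _
        linarith) hq0.le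
      have hK0 : (0:ℝ) ≤ (1 - s ^ ((n:ℝ)-2))^q := Real.rpow_nonneg h0 q
      have hsp : (0:ℝ) ≤ s^(α-1) := Real.rpow_nonneg hs.1.le _
      rw [Real.norm_eq_abs, Real.norm_eq_abs, abs_of_nonneg (mul_nonneg hK0 hsp),
        abs_of_nonneg hsp]
      nlinarith
  -- pointwise bound
  have hpt : ∀ s ∈ Ioo (0:ℝ) 1,
      (1 - t^2)^α * (|φ' s| •
        ((1 - (φ s) ^ ((n:ℝ)-2))^q * (φ s)^(α-1) / (1 - (φ s)^2*t^2)^(α+1)))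
      ≤ (1 - s ^ ((n:ℝ)-2))^q * s^(α-1) := by
    intro s hs
    obtain ⟨hs0, hs1⟩ := hs
    have hD : 0 < 1 - t^2 + s^2*t^2 := hD0 s
    have hDle : 1 - t^2 + s^2*t^2 ≤ 1 := by
      have hs2 : s^2 ≤ 1 := by nlinarith
      nlinarith [mul_le_mul_of_nonneg_right hs2 (sq_nonneg t)]
    have hsq0 : 0 < Real.sqrt (1 - t^2 + s^2*t^2) := Real.sqrt_pos.2 hD
    obtain ⟨hr0, hr1⟩ := hmaps s ⟨hs0, hs1⟩
    have hsqle1 : Real.sqrt (1 - t^2 + s^2*t^2) ≤ 1 := by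
      calc Real.sqrt (1 - t^2 + s^2*t^2) ≤ Real.sqrt 1 := Real.sqrt_le_sqrt hDle
        _ = 1 := Real.sqrt_one
    have hsr : s ≤ φ s := by
      rw [hφdef]
      simp only
      rw [le_div_iff₀ hsq0]
      nlinarith [mul_le_mul_of_nonneg_left hsqle1 hs0.le]
    have hKle : (1 - (φ s) ^ ((n:ℝ)-2))^q ≤ (1 - s ^ ((n:ℝ)-2))^q := by
      have h1 : s ^ ((n:ℝ)-2) ≤ (φ s) ^ ((n:ℝ)-2) := Real.rpow_le_rpow hs0.le hsr hm0.le
      have h2 : (φ s) ^ ((n:ℝ)-2) ≤ 1 := Real.rpow_le_one hr0.le hr1.le hm0.le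
      exact Real.rpow_le_rpow (by linarith) (by linarith) hq0.le
    have hK0 : 0 ≤ (1 - (φ s) ^ ((n:ℝ)-2))^q := by
      have h2 : (φ s) ^ ((n:ℝ)-2) ≤ 1 := Real.rpow_le_one hr0.le hr1.le hm0.le
      exact Real.rpow_nonneg (by linarith) q
    have hsα0 : (0:ℝ) ≤ s^(α-1) := Real.rpow_nonneg hs0.le _
    have hZle : (1 - t^2 + s^2*t^2) ^ (α/2) ≤ 1 := Real.rpow_le_one hD.le hDle (by positivity)
    have hX : 1 - (s / Real.sqrt (1 - t^2 + s^2*t^2))^2*t^2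
        = (1-t^2)/(1 - t^2 + s^2*t^2) := by
      rw [div_pow, Real.sq_sqrt hD.le]
      field_simp
      ring
    rw [smul_eq_mul, abs_of_pos (hφ'pos s)]
    simp only [hφ'def, hφdef] at hKle hK0 ⊢
    rw [hX, rpow_algebra (1 - t^2) (1 - t^2 + s^2*t^2) s _ α h1t hD hs0]
    calc (1 - (s / Real.sqrt (1 - t^2 + s^2*t^2)) ^ ((n:ℝ)-2))^q * s^(α-1)
          * (1 - t^2 + s^2*t^2) ^ (α/2)
        ≤ (1 - (s / Real.sqrt (1 - t^2 + s^2*t^2)) ^ ((n:ℝ)-2))^q * s^(α-1) * 1 :=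
          mul_le_mul_of_nonneg_left hZle (mul_nonneg hK0 hsα0)
      _ = (1 - (s / Real.sqrt (1 - t^2 + s^2*t^2)) ^ ((n:ℝ)-2))^q * s^(α-1) := mul_one _
      _ ≤ (1 - s ^ ((n:ℝ)-2))^q * s^(α-1) := mul_le_mul_of_nonneg_right hKle hsα0
  have hnn : ∀ s ∈ Ioo (0:ℝ) 1,
      0 ≤ (1 - t^2)^α * (|φ' s| •
        ((1 - (φ s) ^ ((n:ℝ)-2))^q * (φ s)^(α-1) / (1 - (φ s)^2*t^2)^(α+1))) := by
    intro s hs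
    obtain ⟨hr0, hr1⟩ := hmaps s hs
    have h1 : (0:ℝ) ≤ 1 - (φ s) ^ ((n:ℝ)-2) := by
      have : (φ s) ^ ((n:ℝ)-2) ≤ 1 := Real.rpow_le_one hr0.le hr1.le hm0.le
      linarith
    have h2 : (0:ℝ) ≤ 1 - (φ s)^2*t^2 := by nlinarith [sq_nonneg (φ s), sq_nonneg t]
    have := Real.rpow_nonneg h1 q
    have := Real.rpow_nonneg hr0.le (α-1)
    have := Real.rpow_nonneg h2 (α+1)
    have := Real.rpow_nonneg h1t.le α
    positivity
  apply MeasureTheory.integral_mono_of_nonneg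
  · filter_upwards [MeasureTheory.ae_restrict_mem measurableSet_Ioo] with s hs
    exact hnn s hs
  · exact hGint
  · filter_upwards [MeasureTheory.ae_restrict_mem measurableSet_Ioo] with s hs
    exact hpt s hs
end

section
/- Let n ≥ 3 be an integer and q real with 1 < q < n/(n-2); set a = n - q(n-2) ∈ (0,2). For each k ≥ 0, Γ(a/(n-2) + 2k/(n-2)) / Γ(2(k+n-1)/(n-2)) ≤ [Γ(2 + a/(n-2)) / Γ(2 + 2/(n-2))] · 1 / ((a+2k)/(n-2) · ((a+2k)/(n-2) + 1)). -/
open Real Set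

lemma gamma_cheb (u v K : ℝ) (hu : 0 < u) (huv : u ≤ v) (hK : 0 ≤ K) :
    Real.Gamma (u + K) * Real.Gamma v ≤ Real.Gamma u * Real.Gamma (v + K) := by
  rcases eq_or_lt_of_le hK with h0 | hKpos
  · rw [← h0, add_zero, add_zero, mul_comm]
  rcases eq_or_lt_of_le huv with h1 | huvlt
  · rw [← h1, mul_comm]
  have hv : 0 < v := lt_trans hu huvlt
  have hvK : 0 < v + K := by linarith
  have huK : 0 < u + K := by linarith
  have hD : 0 < v + K - u := by linarith
  set l : ℝ := K / (v + K - u) with hl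
  have hl0 : 0 < l := div_pos hKpos hD
  have hl1 : l < 1 := (div_lt_one hD).mpr (by linarith)
  have hcvx := Real.convexOn_log_Gamma
  have hsum : (1 - l) + l = 1 := by ring
  have heq1 : (1 - l) * u + l * (v + K) = u + K := by
    field_simp [hl]
    have hlK : l * (v + K - u) = K := by rw [hl, div_mul_cancel₀]; exact ne_of_gt hD
    linear_combination hlK
  have heq2 : l * u + (1 - l) * (v + K) = v := by
    field_simp [hl]
    have hlK : l * (v + K - u) = K := by rw [hl, div_mul_cancel₀]; exact ne_of_gt hD
    linear_combination (-1 : ℝ) * hlK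
  have h1 := hcvx.2 (mem_Ioi.mpr hu) (mem_Ioi.mpr hvK) (by linarith : (0:ℝ) ≤ 1 - l)
    (le_of_lt hl0) hsum
  have h2 := hcvx.2 (mem_Ioi.mpr hu) (mem_Ioi.mpr hvK) (le_of_lt hl0)
    (by linarith : (0:ℝ) ≤ 1 - l) (by ring)
  simp only [smul_eq_mul, Function.comp_apply] at h1 h2
  rw [heq1] at h1
  rw [heq2] at h2
  have hlog : Real.log (Real.Gamma (u + K)) + Real.log (Real.Gamma v) ≤
      Real.log (Real.Gamma u) + Real.log (Real.Gamma (v + K)) := by linarith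
  have gu := Real.Gamma_pos_of_pos hu
  have gv := Real.Gamma_pos_of_pos hv
  have guK := Real.Gamma_pos_of_pos huK
  have gvK := Real.Gamma_pos_of_pos hvK
  rw [← Real.log_mul (ne_of_gt guK) (ne_of_gt gv),
      ← Real.log_mul (ne_of_gt gu) (ne_of_gt gvK)] at hlog
  exact (Real.log_le_log_iff (by positivity) (by positivity)).mp hlog

theorem gamma_ratio_ineq (n : ℕ) (hn : 3 ≤ n) (q a : ℝ) (hq1 : 1 < q)
    (hq2 : q < n / ((n : ℝ) - 2)) (ha : a = (n : ℝ) - q * ((n : ℝ) - 2)) (k : ℕ) :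
    Real.Gamma (a / ((n : ℝ) - 2) + 2 * (k : ℝ) / ((n : ℝ) - 2)) /
        Real.Gamma (2 * ((k : ℝ) + (n : ℝ) - 1) / ((n : ℝ) - 2)) ≤
      (Real.Gamma (2 + a / ((n : ℝ) - 2)) / Real.Gamma (2 + 2 / ((n : ℝ) - 2))) *
        (1 / ((a + 2 * (k : ℝ)) / ((n : ℝ) - 2) * ((a + 2 * (k : ℝ)) / ((n : ℝ) - 2) + 1))) := by
  have hn3 : (3:ℝ) ≤ (n:ℝ) := by exact_mod_cast hn
  have hd : (0:ℝ) < (n:ℝ) - 2 := by linarith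
  set d : ℝ := (n:ℝ) - 2 with hdd
  have hqd : q * d < n := by
    have := (lt_div_iff₀ hd).mp hq2
    linarith
  have ha0 : 0 < a := by rw [ha]; linarith
  have ha2 : a < 2 := by
    rw [ha]
    nlinarith
  have hk : (0:ℝ) ≤ (k:ℝ) := Nat.cast_nonneg k
  set s : ℝ := (a + 2 * (k:ℝ)) / d with hs
  have hs0 : 0 < s := by positivity
  have heq1 : a / d + 2 * (k:ℝ) / d = s := by rw [hs]; ring
  have heq2 : 2 * ((k:ℝ) + (n:ℝ) - 1) / d = (2 + 2/d) + 2 * (k:ℝ) / d := by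
    field_simp
    ring
  have heq3 : (2 + a/d) + 2 * (k:ℝ) / d = s + 2 := by rw [hs]; ring
  have key := gamma_cheb (2 + a/d) (2 + 2/d) (2 * (k:ℝ) / d)
    (by positivity) (by gcongr <;> linarith) (by positivity)
  rw [heq3] at key
  have hsplit : Real.Gamma (s + 2) = s * (s + 1) * Real.Gamma s := by
    have h1 : Real.Gamma (s + 1) = s * Real.Gamma s := Real.Gamma_add_one (ne_of_gt hs0)
    have h2 : Real.Gamma ((s + 1) + 1) = (s + 1) * Real.Gamma (s + 1) :=
      Real.Gamma_add_one (by positivity)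
    rw [show s + 2 = (s + 1) + 1 by ring, h2, h1]
    ring
  rw [hsplit] at key
  have gT := Real.Gamma_pos_of_pos (show (0:ℝ) < (2 + 2/d) + 2 * (k:ℝ)/d by positivity)
  have gb := Real.Gamma_pos_of_pos (show (0:ℝ) < 2 + 2/d by positivity)
  have gs := Real.Gamma_pos_of_pos hs0
  rw [heq1, heq2, div_mul_div_comm, mul_one, div_le_div_iff₀ gT (by positivity)]
  calc Real.Gamma s * (Real.Gamma (2 + 2/d) * (s * (s + 1)))
      = s * (s + 1) * Real.Gamma s * Real.Gamma (2 + 2/d) := by ring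
    _ ≤ Real.Gamma (2 + a/d) * Real.Gamma (2 + 2/d + 2 * (k:ℝ)/d) := key
end
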